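/- The set 𝒮_{n,m} of matrices M(Ψ,X,E) with Ψ ∈ Sp(2n), X ∈ Mat_{2n,m}(R), E ∈ Mat_m(R) symmetric, forms a subgroup of the symplectic group Sp(2n+2m). -/

import Mathlib

open Matrix

abbrev V (n : ℕ) := Fin n ⊕ Fin n

/-- The standard complex structure `J₀ = [[0,-I],[I,0]]` on `ℝ^{2n}`. -/
noncomputable def J0 (n : ℕ) : Matrix (V n) (V n) ℝ :=
  Matrix.fromBlocks 0 (-1) 1 0

/-- The standard complex structure `J̃₀` on `ℝ^{2n} ⊕ ℝ^m ⊕ ℝ^m`. -/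
noncomputable def Jt0 (n m : ℕ) : Matrix (V n ⊕ V m) (V n ⊕ V m) ℝ :=
  Matrix.fromBlocks (J0 n) 0 0 (J0 m)

/-- `Ψ` is symplectic: `Ψᵀ J₀ Ψ = J₀`. -/
def IsSymplectic {n : ℕ} (Ψ : Matrix (V n) (V n) ℝ) : Prop :=
  Ψᵀ * J0 n * Ψ = J0 n

/-- The block matrix `M(Ψ,X,E) = [[Ψ, ΨX, 0],[0, I, 0],[XᵀJ₀, E + ½XᵀJ₀X, I]]`. -/
noncomputable def Mblk {n m : ℕ} (Ψ : Matrix (V n) (V n) ℝ) (X : Matrix (V n) (Fin m) ℝ)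
    (E : Matrix (Fin m) (Fin m) ℝ) : Matrix (V n ⊕ V m) (V n ⊕ V m) ℝ :=
  Matrix.fromBlocks Ψ (Matrix.fromCols (Ψ * X) 0)
    (Matrix.fromRows 0 (Xᵀ * J0 n))
    (Matrix.fromBlocks 1 0 (E + (1 / 2 : ℝ) • (Xᵀ * J0 n * X)) 1)

section Aux

variable {n m : ℕ}

lemma fromRows_add' {α : Type*} [Add α] {m₁ m₂ p : Type*} (A₁ : Matrix m₁ p α) (A₂ : Matrix m₂ p α)
    (B₁ : Matrix m₁ p α) (B₂ : Matrix m₂ p α) :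
    fromRows A₁ A₂ + fromRows B₁ B₂ = fromRows (A₁ + B₁) (A₂ + B₂) := by
  ext (i | i) j <;> simp

lemma fromCols_add' {α : Type*} [Add α] {p n₁ n₂ : Type*} (A₁ : Matrix p n₁ α) (A₂ : Matrix p n₂ α)
    (B₁ : Matrix p n₁ α) (B₂ : Matrix p n₂ α) :
    fromCols A₁ A₂ + fromCols B₁ B₂ = fromCols (A₁ + B₁) (A₂ + B₂) := by
  ext i (j | j) <;> simp

lemma J0_transpose (n : ℕ) : (J0 n)ᵀ = -J0 n := by
  rw [J0, Matrix.fromBlocks_transpose]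
  ext (i | i) (j | j) <;> simp [Matrix.fromBlocks, Matrix.one_apply]

lemma J0_mul_J0 (n : ℕ) : J0 n * J0 n = -1 := by
  rw [J0, Matrix.fromBlocks_multiply]
  ext (i | i) (j | j) <;> simp [Matrix.fromBlocks, Matrix.one_apply]

lemma XJX_transpose (X : Matrix (V n) (Fin m) ℝ) :
    (Xᵀ * J0 n * X)ᵀ = -(Xᵀ * J0 n * X) := by
  rw [Matrix.transpose_mul, Matrix.transpose_mul, Matrix.transpose_transpose, J0_transpose]
  rw [Matrix.neg_mul, Matrix.mul_neg, Matrix.mul_assoc]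

namespace IsSymplectic

variable {Ψ Ψ' : Matrix (V n) (V n) ℝ}

lemma isUnit_det (h : IsSymplectic Ψ) : IsUnit Ψ.det := by
  apply Matrix.isUnit_det_of_left_inverse (B := -(J0 n * Ψᵀ * J0 n))
  have : -(J0 n * Ψᵀ * J0 n) * Ψ = -(J0 n * (Ψᵀ * J0 n * Ψ)) := by
    simp [Matrix.mul_assoc]
  rw [this, h, J0_mul_J0, neg_neg]

lemma mul_inv (h : IsSymplectic Ψ) : Ψ * Ψ⁻¹ = 1 :=
  Matrix.mul_nonsing_inv _ h.isUnit_det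

lemma inv_mul (h : IsSymplectic Ψ) : Ψ⁻¹ * Ψ = 1 :=
  Matrix.nonsing_inv_mul _ h.isUnit_det

lemma transpose_J (h : IsSymplectic Ψ) : Ψᵀ * J0 n = J0 n * Ψ⁻¹ := by
  have := congrArg (· * Ψ⁻¹) h
  simpa [Matrix.mul_assoc, h.mul_inv] using this

lemma J_mul (h : IsSymplectic Ψ) : J0 n * Ψ = Ψ⁻¹ᵀ * J0 n := by
  have h2 := congrArg Matrix.transpose h.transpose_J
  rw [Matrix.transpose_mul, Matrix.transpose_mul, J0_transpose, Matrix.transpose_transpose] at h2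
  simp only [Matrix.neg_mul, Matrix.mul_neg, neg_inj] at h2
  exact h2

lemma inv (h : IsSymplectic Ψ) : IsSymplectic Ψ⁻¹ := by
  unfold IsSymplectic
  rw [Matrix.transpose_nonsing_inv]
  have h1 : J0 n = Ψᵀ * J0 n * Ψ := h.symm
  calc (Ψᵀ)⁻¹ * J0 n * Ψ⁻¹ = (Ψᵀ)⁻¹ * (Ψᵀ * J0 n * Ψ) * Ψ⁻¹ := by rw [← h1]
    _ = ((Ψᵀ)⁻¹ * Ψᵀ) * J0 n * (Ψ * Ψ⁻¹) := by simp [Matrix.mul_assoc]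
    _ = J0 n := by
        rw [Matrix.nonsing_inv_mul _ (by simpa using h.isUnit_det), h.mul_inv]
        simp

lemma mul (h : IsSymplectic Ψ) (h' : IsSymplectic Ψ') : IsSymplectic (Ψ * Ψ') := by
  unfold IsSymplectic at *
  rw [Matrix.transpose_mul]
  calc Ψ'ᵀ * Ψᵀ * J0 n * (Ψ * Ψ') = Ψ'ᵀ * (Ψᵀ * J0 n * Ψ) * Ψ' := by simp [Matrix.mul_assoc]
    _ = J0 n := by rw [h, h']

lemma one : IsSymplectic (1 : Matrix (V n) (V n) ℝ) := by
  simp [IsSymplectic]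

lemma inv_inv (h : IsSymplectic Ψ) : Ψ⁻¹⁻¹ = Ψ :=
  Matrix.nonsing_inv_nonsing_inv _ h.isUnit_det

lemma tJ (h : IsSymplectic Ψ) {p : Type*} (Z : Matrix (V n) p ℝ) :
    Ψᵀ * (J0 n * Z) = J0 n * (Ψ⁻¹ * Z) := by
  rw [← Matrix.mul_assoc, h.transpose_J, Matrix.mul_assoc]

lemma itJ (h : IsSymplectic Ψ) {p : Type*} (Z : Matrix (V n) p ℝ) :
    Ψ⁻¹ᵀ * (J0 n * Z) = J0 n * (Ψ * Z) := by
  rw [← Matrix.mul_assoc, ← h.J_mul, Matrix.mul_assoc]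

lemma mul_inv_cancel_left (h : IsSymplectic Ψ) {p : Type*} (Z : Matrix (V n) p ℝ) :
    Ψ * (Ψ⁻¹ * Z) = Z := by
  rw [← Matrix.mul_assoc, h.mul_inv, Matrix.one_mul]

lemma inv_mul_cancel_left (h : IsSymplectic Ψ) {p : Type*} (Z : Matrix (V n) p ℝ) :
    Ψ⁻¹ * (Ψ * Z) = Z := by
  rw [← Matrix.mul_assoc, h.inv_mul, Matrix.one_mul]

end IsSymplectic

lemma closure_symm {Ψ' : Matrix (V n) (V n) ℝ} (hΨ' : IsSymplectic Ψ')
    (X X' : Matrix (V n) (Fin m) ℝ) :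
    (X' + Ψ'⁻¹ * X)ᵀ * J0 n * (X' + Ψ'⁻¹ * X)
      = X'ᵀ * J0 n * X' + Xᵀ * J0 n * X
        + (Xᵀ * J0 n * Ψ' * X' - (Xᵀ * J0 n * Ψ' * X')ᵀ) := by
  simp only [Matrix.transpose_add, Matrix.transpose_mul, Matrix.transpose_transpose,
    J0_transpose, Matrix.add_mul, Matrix.mul_add, Matrix.mul_assoc, Matrix.neg_mul,
    Matrix.mul_neg, sub_eq_add_neg, neg_neg, hΨ'.tJ, hΨ'.itJ,
    hΨ'.mul_inv_cancel_left, hΨ'.inv_mul_cancel_left]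
  abel

lemma sandwich {Ψ : Matrix (V n) (V n) ℝ} (hΨ : IsSymplectic Ψ)
    (X : Matrix (V n) (Fin m) ℝ) :
    (Ψ * X)ᵀ * J0 n * (Ψ * X) = Xᵀ * J0 n * X := by
  rw [Matrix.transpose_mul, Matrix.mul_assoc Xᵀ, Matrix.mul_assoc Xᵀ,
    ← Matrix.mul_assoc (Ψᵀ * J0 n), hΨ, ← Matrix.mul_assoc]

noncomputable def Mb (Ψ : Matrix (V n) (V n) ℝ) (X : Matrix (V n) (Fin m) ℝ)
    (F : Matrix (Fin m) (Fin m) ℝ) : Matrix (V n ⊕ V m) (V n ⊕ V m) ℝ :=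
  Matrix.fromBlocks Ψ (Matrix.fromCols (Ψ * X) 0)
    (Matrix.fromRows 0 (Xᵀ * J0 n))
    (Matrix.fromBlocks 1 0 F 1)

lemma half_add_half (K : Matrix (Fin m) (Fin m) ℝ) :
    (1 / 2 : ℝ) • K + (1 / 2 : ℝ) • K = K := by
  rw [← add_smul]; norm_num

lemma mem_iff (M : Matrix (V n ⊕ V m) (V n ⊕ V m) ℝ) :
    (∃ (Ψ : Matrix (V n) (V n) ℝ) (X : Matrix (V n) (Fin m) ℝ)
        (E : Matrix (Fin m) (Fin m) ℝ), IsSymplectic Ψ ∧ Eᵀ = E ∧ M = Mblk Ψ X E) ↔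
    (∃ (Ψ : Matrix (V n) (V n) ℝ) (X : Matrix (V n) (Fin m) ℝ)
        (F : Matrix (Fin m) (Fin m) ℝ),
          IsSymplectic Ψ ∧ F - Fᵀ = Xᵀ * J0 n * X ∧ M = Mb Ψ X F) := by
  constructor
  · rintro ⟨Ψ, X, E, hΨ, hE, rfl⟩
    refine ⟨Ψ, X, E + (1 / 2 : ℝ) • (Xᵀ * J0 n * X), hΨ, ?_, rfl⟩
    rw [Matrix.transpose_add, Matrix.transpose_smul, XJX_transpose, hE, smul_neg]
    have h2 : E + (1 / 2 : ℝ) • (Xᵀ * J0 n * X) - (E + -((1 / 2 : ℝ) • (Xᵀ * J0 n * X)))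
        = (1 / 2 : ℝ) • (Xᵀ * J0 n * X) + (1 / 2 : ℝ) • (Xᵀ * J0 n * X) := by abel
    rw [h2, half_add_half]
  · rintro ⟨Ψ, X, F, hΨ, hF, rfl⟩
    refine ⟨Ψ, X, F - (1 / 2 : ℝ) • (Xᵀ * J0 n * X), hΨ, ?_, ?_⟩
    · rw [Matrix.transpose_sub, Matrix.transpose_smul, XJX_transpose, smul_neg,
        sub_neg_eq_add, eq_sub_iff_add_eq, add_assoc, half_add_half, ← hF]
      abel
    · unfold Mblk Mb
      rw [Matrix.fromBlocks_inj]
      refine ⟨rfl, rfl, rfl, ?_⟩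
      rw [Matrix.fromBlocks_inj]
      refine ⟨rfl, rfl, ?_, rfl⟩
      abel

lemma Mb_mul (Ψ Ψ' : Matrix (V n) (V n) ℝ) (X X' : Matrix (V n) (Fin m) ℝ)
    (F F' : Matrix (Fin m) (Fin m) ℝ) (hΨ' : IsSymplectic Ψ') :
    Mb Ψ X F * Mb Ψ' X' F' =
      Mb (Ψ * Ψ') (X' + Ψ'⁻¹ * X) (Xᵀ * J0 n * Ψ' * X' + F + F') := by
  unfold Mb
  rw [Matrix.fromBlocks_multiply, Matrix.fromCols_mul_fromRows,
    Matrix.mul_fromCols, Matrix.fromCols_mul_fromBlocks,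
    Matrix.fromRows_mul, Matrix.fromBlocks_mul_fromRows,
    Matrix.fromRows_mul_fromCols, Matrix.fromBlocks_multiply,
    Matrix.fromBlocks_add, fromRows_add', fromCols_add']
  rw [Matrix.fromBlocks_inj]
  refine ⟨by simp, ?_, ?_, by simp [Matrix.mul_assoc, add_assoc]⟩
  · simp only [Matrix.mul_zero, Matrix.zero_mul, Matrix.mul_one, add_zero, zero_add,
      Matrix.mul_add]
    rw [Matrix.fromCols_ext_iff]
    constructor
    · rw [Matrix.mul_assoc, Matrix.mul_assoc, ← Matrix.mul_assoc Ψ' Ψ'⁻¹ X,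
        hΨ'.mul_inv, Matrix.one_mul]
    · simp
  · simp only [Matrix.mul_zero, Matrix.zero_mul, Matrix.one_mul, add_zero, zero_add,
      Matrix.transpose_add, Matrix.transpose_mul]
    rw [Matrix.fromRows_ext_iff]
    refine ⟨rfl, ?_⟩
    rw [Matrix.add_mul, Matrix.mul_assoc Xᵀ, hΨ'.J_mul, ← Matrix.mul_assoc, add_comm]

lemma Mb_one : (Mb 1 0 0 : Matrix (V n ⊕ V m) (V n ⊕ V m) ℝ) = 1 := by
  unfold Mb
  simp [Matrix.fromBlocks_one]

lemma Mb_symplectic (Ψ : Matrix (V n) (V n) ℝ) (X : Matrix (V n) (Fin m) ℝ)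
    (F : Matrix (Fin m) (Fin m) ℝ) (hΨ : IsSymplectic Ψ)
    (hF : F - Fᵀ = Xᵀ * J0 n * X) :
    (Mb Ψ X F)ᵀ * Jt0 n m * Mb Ψ X F = Jt0 n m := by
  have hJm : J0 m = Matrix.fromBlocks 0 (-1) 1 0 := rfl
  unfold Mb Jt0
  rw [hJm]
  rw [Matrix.fromBlocks_transpose, Matrix.transpose_fromRows, Matrix.transpose_fromCols,
    Matrix.fromBlocks_transpose]
  rw [Matrix.fromBlocks_multiply, Matrix.fromBlocks_multiply]
  simp only [Matrix.mul_fromCols, Matrix.fromRows_mul, Matrix.fromCols_mul_fromRows,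
    Matrix.fromCols_mul_fromBlocks, Matrix.fromBlocks_mul_fromRows,
    Matrix.fromRows_mul_fromCols, Matrix.fromBlocks_multiply,
    Matrix.mul_zero, Matrix.zero_mul, Matrix.mul_one, Matrix.one_mul, add_zero, zero_add,
    Matrix.transpose_zero, Matrix.transpose_mul, Matrix.transpose_transpose, J0_transpose,
    Matrix.neg_mul, Matrix.mul_neg, neg_zero, neg_neg,
    Matrix.fromBlocks_add, fromRows_add', fromCols_add']
  rw [Matrix.fromBlocks_inj]
  have h1 : Ψᵀ * J0 n * (Ψ * X) = J0 n * X := by rw [← Matrix.mul_assoc, hΨ]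
  have h2 : Xᵀ * Ψᵀ * J0 n * Ψ = Xᵀ * J0 n := by
    rw [Matrix.mul_assoc Xᵀ, Matrix.mul_assoc Xᵀ, hΨ]
  have h3 : Xᵀ * Ψᵀ * J0 n * (Ψ * X) = Xᵀ * J0 n * X := by
    rw [← Matrix.mul_assoc, h2]
  refine ⟨hΨ, ?_, ?_, ?_⟩
  · rw [h1]
    simp
  · rw [h2]
    simp
  · rw [h3, Matrix.transpose_one,
      show (0 : Matrix (Fin m ⊕ Fin m) (Fin m) ℝ) = Matrix.fromRows 0 0 by simp,
      Matrix.fromCols_fromRows_eq_fromBlocks, Matrix.fromBlocks_add, Matrix.fromBlocks_inj]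
    have h4 : Fᵀ - F = -(Xᵀ * J0 n * X) := by rw [← hF]; abel
    refine ⟨?_, by simp, by simp, by simp⟩
    rw [show Fᵀ + -(1 * F) = Fᵀ - F by rw [Matrix.one_mul]; abel, h4]
    abel

end Aux

/-- The set `𝒮_{n,m}` of matrices `M(Ψ,X,E)` is a subgroup of `Sp(2n+2m)`:
all its elements are symplectic for `J̃₀`, it contains the identity, it is
closed under multiplication, and every element is invertible with inverse
again in the set. -/
theorem stmt3 {n m : ℕ} :
    (let S : Set (Matrix (V n ⊕ V m) (V n ⊕ V m) ℝ) :=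
      {M | ∃ (Ψ : Matrix (V n) (V n) ℝ) (X : Matrix (V n) (Fin m) ℝ)
          (E : Matrix (Fin m) (Fin m) ℝ),
            IsSymplectic Ψ ∧ Eᵀ = E ∧ M = Mblk Ψ X E};
    (∀ M ∈ S, Mᵀ * Jt0 n m * M = Jt0 n m) ∧
    (1 : Matrix (V n ⊕ V m) (V n ⊕ V m) ℝ) ∈ S ∧
    (∀ M ∈ S, ∀ M' ∈ S, M * M' ∈ S) ∧
    (∀ M ∈ S, IsUnit M ∧ M⁻¹ ∈ S)) := by
  intro S
  refine ⟨?_, ?_, ?_, ?_⟩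
  · intro M hM
    obtain ⟨Ψ, X, F, hΨ, hF, rfl⟩ := (mem_iff M).mp hM
    exact Mb_symplectic Ψ X F hΨ hF
  · exact (mem_iff 1).mpr ⟨1, 0, 0, IsSymplectic.one, by simp, Mb_one.symm⟩
  · intro M hM M' hM'
    obtain ⟨Ψ, X, F, hΨ, hF, rfl⟩ := (mem_iff M).mp hM
    obtain ⟨Ψ', X', F', hΨ', hF', rfl⟩ := (mem_iff M').mp hM'
    refine (mem_iff _).mpr ⟨Ψ * Ψ', X' + Ψ'⁻¹ * X, Xᵀ * J0 n * Ψ' * X' + F + F',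
      hΨ.mul hΨ', ?_, Mb_mul Ψ Ψ' X X' F F' hΨ'⟩
    rw [closure_symm hΨ' X X']
    simp only [Matrix.transpose_add]
    rw [← hF, ← hF']
    abel
  · intro M hM
    obtain ⟨Ψ, X, F, hΨ, hF, rfl⟩ := (mem_iff M).mp hM
    have hMN : Mb Ψ X F * Mb Ψ⁻¹ (-(Ψ * X)) (Xᵀ * J0 n * X - F) = 1 := by
      rw [Mb_mul _ _ _ _ _ _ hΨ.inv, hΨ.mul_inv, hΨ.inv_inv]
      have h5 : Xᵀ * J0 n * Ψ⁻¹ * (-(Ψ * X)) = -(Xᵀ * J0 n * X) := by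
        rw [Matrix.mul_neg, Matrix.mul_assoc (Xᵀ * J0 n), hΨ.inv_mul_cancel_left]
      rw [h5, neg_add_cancel,
        show -(Xᵀ * J0 n * X) + F + (Xᵀ * J0 n * X - F) = 0 from by abel, Mb_one]
    have hNM : Mb Ψ⁻¹ (-(Ψ * X)) (Xᵀ * J0 n * X - F) * Mb Ψ X F = 1 := by
      rw [Mb_mul _ _ _ _ _ _ hΨ, hΨ.inv_mul]
      have h6 : (-(Ψ * X))ᵀ * J0 n * Ψ * X = -(Xᵀ * J0 n * X) := by
        rw [Matrix.transpose_neg, Matrix.neg_mul, Matrix.neg_mul, Matrix.neg_mul, neg_inj,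
          Matrix.mul_assoc ((Ψ * X)ᵀ * J0 n), sandwich hΨ]
      rw [h6, Matrix.mul_neg, hΨ.inv_mul_cancel_left, add_neg_cancel,
        show -(Xᵀ * J0 n * X) + (Xᵀ * J0 n * X - F) + F = 0 from by abel, Mb_one]
    have hU : IsUnit (Mb Ψ X F) :=
      (Matrix.isUnit_iff_isUnit_det _).mpr (Matrix.isUnit_det_of_right_inverse hMN)
    refine ⟨hU, ?_⟩
    rw [Matrix.inv_eq_right_inv hMN]
    refine (mem_iff _).mpr ⟨Ψ⁻¹, -(Ψ * X), Xᵀ * J0 n * X - F, hΨ.inv, ?_, rfl⟩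
    have h7 : (-(Ψ * X))ᵀ * J0 n * (-(Ψ * X)) = Xᵀ * J0 n * X := by
      rw [Matrix.transpose_neg, Matrix.neg_mul, Matrix.neg_mul, Matrix.mul_neg, neg_neg,
        sandwich hΨ]
    rw [h7, Matrix.transpose_sub, XJX_transpose, ← hF]
    abel
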